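/- arXiv:2012.12159 — 3 statements merged into one kernel-verified Lean document; each statement's English description precedes it below -/
import Mathlib

section
/- For a convex body K ⊂ R^n, the function z ↦ |K^z| (the volume of the polar dual of K with respect to center z) is strictly convex on the interior of K. -/
open MeasureTheory Set Real
open scoped InnerProductSpace Pointwise

lemma exp_neg_image_Ioi : (fun s : ℝ => Real.exp (-s)) '' (Set.Ioi 0) = Set.Ioo 0 1 := by
  ext t
  constructor
  · rintro ⟨s, hs, rfl⟩
    exact ⟨Real.exp_pos _, by simpa using Real.exp_lt_one_iff.2 (neg_lt_zero.2 hs)⟩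
  · rintro ⟨h0, h1⟩
    refine ⟨-Real.log t, ?_, by simp [Real.exp_log h0]⟩
    simpa using Real.log_neg h0 h1

lemma gamma_log_lintegral (n : ℕ) :
    ∫⁻ t in Set.Ioo (0:ℝ) 1, ENNReal.ofReal ((-Real.log t) ^ n) = ENNReal.ofReal (Nat.factorial n : ℝ) := by
  have hderiv : ∀ x ∈ Set.Ioi (0:ℝ),
      HasDerivWithinAt (fun s : ℝ => Real.exp (-s)) (-Real.exp (-x)) (Set.Ioi 0) x := by
    intro x _
    simpa using ((hasDerivAt_neg x).exp).hasDerivWithinAt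
  have hinj : Set.InjOn (fun s : ℝ => Real.exp (-s)) (Set.Ioi 0) := by
    intro a _ b _ hab
    simpa using Real.exp_injective hab
  have hGamma : IntegrableOn (fun x : ℝ => Real.exp (-x) * x ^ n) (Set.Ioi 0) := by
    have := Real.GammaIntegral_convergent (s := (n:ℝ) + 1) (by positivity)
    refine this.congr_fun ?_ measurableSet_Ioi
    intro x hx
    simp only [add_sub_cancel_right, Real.rpow_natCast]
  have hInt : IntegrableOn (fun t : ℝ => (-Real.log t) ^ n) (Set.Ioo 0 1) := by
    rw [← exp_neg_image_Ioi,
      integrableOn_image_iff_integrableOn_abs_deriv_smul measurableSet_Ioi hderiv hinj]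
    refine hGamma.congr_fun ?_ measurableSet_Ioi
    intro x hx
    simp [abs_of_nonneg (Real.exp_pos (-x)).le, Real.log_exp, smul_eq_mul]
  have hnn : (0:ℝ→ℝ) ≤ᵐ[volume.restrict (Set.Ioo (0:ℝ) 1)] fun t => (-Real.log t) ^ n := by
    filter_upwards [MeasureTheory.ae_restrict_mem measurableSet_Ioo] with t ht
    have : Real.log t ≤ 0 := (Real.log_neg ht.1 ht.2).le
    simp only [Pi.zero_apply]
    exact pow_nonneg (by linarith) n
  rw [← MeasureTheory.ofReal_integral_eq_lintegral_ofReal hInt hnn]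
  congr 1
  rw [← exp_neg_image_Ioi,
    MeasureTheory.integral_image_eq_integral_abs_deriv_smul measurableSet_Ioi hderiv hinj]
  have : ∫ x in Set.Ioi (0:ℝ), |(-Real.exp (-x))| • (-Real.log (Real.exp (-x))) ^ n
      = ∫ x in Set.Ioi (0:ℝ), Real.exp (-x) * x ^ n := by
    refine setIntegral_congr_fun measurableSet_Ioi ?_
    intro x hx
    simp [abs_of_nonneg (Real.exp_pos (-x)).le, Real.log_exp, smul_eq_mul]
  rw [this]
  have hG := Real.Gamma_eq_integral (s := (n:ℝ) + 1) (by positivity)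
  rw [Real.Gamma_nat_eq_factorial] at hG
  rw [hG]
  refine setIntegral_congr_fun measurableSet_Ioi ?_
  intro x hx
  simp only [add_sub_cancel_right, Real.rpow_natCast]

lemma volume_formula {n : ℕ} (hn : 0 < n) (g : EuclideanSpace ℝ (Fin n) → ℝ) (hg : Continuous g)
    (r : ℝ) (hr : 0 < r) (hlb : ∀ ξ, r * ‖ξ‖ ≤ g ξ)
    (hom : ∀ c : ℝ, 0 < c → ∀ ξ, g (c • ξ) = c * g ξ) :
    ∫⁻ ξ, ENNReal.ofReal (Real.exp (-(g ξ))) =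
      ENNReal.ofReal (Nat.factorial n : ℝ) * volume {ξ | g ξ ≤ 1} := by
  haveI : Nontrivial (EuclideanSpace ℝ (Fin n)) := by
    refine ⟨EuclideanSpace.single ⟨0, hn⟩ 1, 0, ?_⟩
    intro h
    have := congrArg norm h
    simp [EuclideanSpace.norm_single] at this
  have hzero : volume ({0} : Set (EuclideanSpace ℝ (Fin n))) = 0 := by
    have := MeasureTheory.Measure.addHaar_submodule (volume)
      (⊥ : Submodule ℝ (EuclideanSpace ℝ (Fin n))) bot_ne_top
    simpa using this
  rw [MeasureTheory.lintegral_eq_lintegral_meas_le (f := fun ξ => Real.exp (-(g ξ))) volume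
    (Filter.Eventually.of_forall fun ξ => (Real.exp_pos _).le)
    ((Real.continuous_exp.comp hg.neg).aemeasurable :
      AEMeasurable (fun ξ => Real.exp (-(g ξ))) volume)]
  rw [← Set.Ioo_union_Ici_eq_Ioi (zero_lt_one)]
  rw [MeasureTheory.lintegral_union measurableSet_Ici
    (by rw [Set.disjoint_left]; rintro x ⟨_, h1⟩ h2; exact absurd h2 (not_le.2 h1))]
  have h2 : ∫⁻ t in Set.Ici (1:ℝ),
      volume {a : EuclideanSpace ℝ (Fin n) | t ≤ Real.exp (-(g a))} = 0 := by
    rw [← MeasureTheory.lintegral_zero (μ := volume.restrict (Set.Ici (1:ℝ)))]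
    refine MeasureTheory.setLIntegral_congr_fun measurableSet_Ici ?_
    intro t ht
    refine measure_mono_null (fun a ha => ?_) hzero
    have h1 : (1:ℝ) ≤ Real.exp (-(g a)) := le_trans ht ha
    have hga : g a ≤ 0 := by
      have := Real.one_le_exp_iff.mp h1
      linarith
    have : ‖a‖ ≤ 0 := by nlinarith [hlb a, norm_nonneg a]
    simpa using norm_le_zero_iff.mp this
  rw [h2, add_zero]
  have h1 : ∀ t ∈ Set.Ioo (0:ℝ) 1,
      volume {a : EuclideanSpace ℝ (Fin n) | t ≤ Real.exp (-(g a))} =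
        ENNReal.ofReal ((-Real.log t) ^ n) * volume {ξ | g ξ ≤ 1} := by
    intro t ht
    set s : ℝ := -Real.log t with hs_def
    have hs : 0 < s := by
      have := Real.log_neg ht.1 ht.2
      simp only [hs_def]; linarith
    have hset : {a : EuclideanSpace ℝ (Fin n) | t ≤ Real.exp (-(g a))}
        = s • {ξ : EuclideanSpace ℝ (Fin n) | g ξ ≤ 1} := by
      ext ξ
      rw [Set.mem_smul_set_iff_inv_smul_mem₀ (ne_of_gt hs)]
      simp only [Set.mem_setOf_eq]
      rw [hom s⁻¹ (by positivity)]
      constructor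
      · intro h
        have hlog : Real.log t ≤ -(g ξ) := (Real.log_le_iff_le_exp ht.1).2 h
        have : g ξ ≤ s := by simp only [hs_def]; linarith
        calc s⁻¹ * g ξ ≤ s⁻¹ * s := by
              exact mul_le_mul_of_nonneg_left this (by positivity)
          _ = 1 := by field_simp
      · intro h
        have hgs : g ξ ≤ s := by
          have := mul_le_mul_of_nonneg_left h hs.le
          rw [← mul_assoc, mul_inv_cancel₀ (ne_of_gt hs), one_mul, mul_one] at this
          exact this
        rw [← Real.exp_log ht.1]
        refine Real.exp_le_exp.2 ?_
        simp only [hs_def] at hgs; linarith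
    rw [hset, MeasureTheory.Measure.addHaar_smul, finrank_euclideanSpace_fin,
      abs_of_pos (pow_pos hs _)]
  rw [MeasureTheory.setLIntegral_congr_fun measurableSet_Ioo
    h1]
  rw [MeasureTheory.lintegral_mul_const'' _ (f := fun t : ℝ => ENNReal.ofReal ((-Real.log t) ^ n))
    (((Real.measurable_log.neg.pow_const n).ennreal_ofReal).aemeasurable :
      AEMeasurable (fun t : ℝ => ENNReal.ofReal ((-Real.log t) ^ n))
        (volume.restrict (Set.Ioo (0:ℝ) 1)))]
  rw [gamma_log_lintegral]

noncomputable def suppFn {n : ℕ} (K : Set (EuclideanSpace ℝ (Fin n)))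
    (ξ : EuclideanSpace ℝ (Fin n)) : ℝ :=
  sSup ((fun x => ⟪ξ, x⟫_ℝ) '' K)

lemma suppFn_bddAbove {n : ℕ} {K : Set (EuclideanSpace ℝ (Fin n))} (hKcomp : IsCompact K)
    (ξ : EuclideanSpace ℝ (Fin n)) : BddAbove ((fun x => ⟪ξ, x⟫_ℝ) '' K) :=
  (hKcomp.image (Continuous.inner continuous_const continuous_id)).bddAbove

lemma suppFn_continuous {n : ℕ} {K : Set (EuclideanSpace ℝ (Fin n))} (hKcomp : IsCompact K)
    (hKne : K.Nonempty) : Continuous (suppFn K) := by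
  obtain ⟨R, hR⟩ := hKcomp.isBounded.exists_norm_le
  obtain ⟨x₀, hx₀⟩ := hKne
  have hR0 : 0 ≤ R := le_trans (norm_nonneg x₀) (hR x₀ hx₀)
  have key : ∀ ξ₁ ξ₂ : EuclideanSpace ℝ (Fin n),
      suppFn K ξ₁ ≤ suppFn K ξ₂ + R * ‖ξ₁ - ξ₂‖ := by
    intro ξ₁ ξ₂
    refine csSup_le (⟨_, Set.mem_image_of_mem _ hx₀⟩) ?_
    rintro v ⟨x, hx, rfl⟩
    have h1 : ⟪ξ₁, x⟫_ℝ = ⟪ξ₂, x⟫_ℝ + ⟪ξ₁ - ξ₂, x⟫_ℝ := by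
      rw [← inner_add_left, add_sub_cancel]
    have h2 : ⟪ξ₂, x⟫_ℝ ≤ suppFn K ξ₂ :=
      le_csSup (suppFn_bddAbove hKcomp ξ₂) (Set.mem_image_of_mem _ hx)
    have h3 : ⟪ξ₁ - ξ₂, x⟫_ℝ ≤ ‖ξ₁ - ξ₂‖ * ‖x‖ := real_inner_le_norm _ _
    have h4 : ‖ξ₁ - ξ₂‖ * ‖x‖ ≤ ‖ξ₁ - ξ₂‖ * R :=
      mul_le_mul_of_nonneg_left (hR x hx) (norm_nonneg _)
    simp only []; rw [h1]; nlinarith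
  have lip : LipschitzWith R.toNNReal (suppFn K) := by
    refine LipschitzWith.of_dist_le_mul fun ξ₁ ξ₂ => ?_
    rw [Real.dist_eq, Real.coe_toNNReal _ hR0, dist_eq_norm, abs_sub_le_iff]
    constructor
    · have := key ξ₁ ξ₂; linarith
    · have := key ξ₂ ξ₁
      rw [norm_sub_rev] at this; linarith
  exact lip.continuous




lemma suppFn_smul {n : ℕ} {K : Set (EuclideanSpace ℝ (Fin n))} (hKne : K.Nonempty)
    {c : ℝ} (hc : 0 < c) (ξ : EuclideanSpace ℝ (Fin n)) :
    suppFn K (c • ξ) = c * suppFn K ξ := by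
  unfold suppFn
  have himg : (fun x => ⟪c • ξ, x⟫_ℝ) '' K = c • ((fun x => ⟪ξ, x⟫_ℝ) '' K) := by
    rw [← Set.image_smul, Set.image_image]
    exact Set.image_congr fun x _ => by rw [real_inner_smul_left, smul_eq_mul]
  rw [himg, Real.sSup_smul_of_nonneg hc.le, smul_eq_mul]

lemma key_repr {n : ℕ} (hn : 0 < n) {K : Set (EuclideanSpace ℝ (Fin n))}
    (hKcomp : IsCompact K) {z : EuclideanSpace ℝ (Fin n)} (hz : z ∈ interior K) :
    Integrable (fun ξ => Real.exp (⟪ξ, z⟫_ℝ - suppFn K ξ)) ∧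
    ∫ ξ, Real.exp (⟪ξ, z⟫_ℝ - suppFn K ξ) =
      (Nat.factorial n : ℝ) *
        (volume {ξ : EuclideanSpace ℝ (Fin n) | ∀ x ∈ K, ⟪ξ, x - z⟫_ℝ ≤ 1}).toReal := by
  have hKne : K.Nonempty := ⟨z, interior_subset hz⟩
  have hcont : Continuous (suppFn K) := suppFn_continuous hKcomp hKne
  set g : EuclideanSpace ℝ (Fin n) → ℝ := fun ξ => suppFn K ξ - ⟪ξ, z⟫_ℝ with hg_def
  have hgcont : Continuous g := hcont.sub (Continuous.inner continuous_id continuous_const)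
  obtain ⟨r, hr, hball⟩ := Metric.nhds_basis_closedBall.mem_iff.mp
    (mem_interior_iff_mem_nhds.mp hz)
  have hlb : ∀ ξ, r * ‖ξ‖ ≤ g ξ := by
    intro ξ
    rcases eq_or_ne ξ 0 with rfl | hξ
    · have h0 : ⟪(0 : EuclideanSpace ℝ (Fin n)), z⟫_ℝ ≤ suppFn K 0 := by
        refine le_csSup (suppFn_bddAbove hKcomp 0) ⟨z, interior_subset hz, rfl⟩
      simp only [hg_def, norm_zero, mul_zero]
      linarith
    · have hnξ : (0:ℝ) < ‖ξ‖ := norm_pos_iff.2 hξ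
      set x : EuclideanSpace ℝ (Fin n) := z + (r * ‖ξ‖⁻¹) • ξ with hx_def
      have hxK : x ∈ K := by
        refine hball ?_
        rw [Metric.mem_closedBall, dist_eq_norm, hx_def, add_sub_cancel_left, norm_smul]
        rw [Real.norm_eq_abs, abs_of_pos (by positivity)]
        field_simp
        exact le_rfl
      have hval : ⟪ξ, x⟫_ℝ = ⟪ξ, z⟫_ℝ + r * ‖ξ‖ := by
        rw [hx_def, inner_add_right, real_inner_smul_right,
          real_inner_self_eq_norm_mul_norm]
        field_simp
      have hle : ⟪ξ, x⟫_ℝ ≤ suppFn K ξ :=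
        le_csSup (suppFn_bddAbove hKcomp ξ) ⟨x, hxK, rfl⟩
      simp only [hg_def]
      linarith
  have hom : ∀ c : ℝ, 0 < c → ∀ ξ, g (c • ξ) = c * g ξ := by
    intro c hc ξ
    simp only [hg_def, suppFn_smul hKne hc, real_inner_smul_left]
    ring
  have hset : {ξ : EuclideanSpace ℝ (Fin n) | ∀ x ∈ K, ⟪ξ, x - z⟫_ℝ ≤ 1}
      = {ξ | g ξ ≤ 1} := by
    ext ξ
    simp only [Set.mem_setOf_eq, hg_def, sub_le_iff_le_add]
    rw [suppFn, csSup_le_iff (suppFn_bddAbove hKcomp ξ) (hKne.image _),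
      Set.forall_mem_image]
    refine forall₂_congr fun x hx => ?_
    rw [inner_sub_right]
    constructor <;> intro h <;> linarith
  have hformula := volume_formula hn g hgcont r hr hlb hom
  have hexp_eq : ∀ ξ, Real.exp (⟪ξ, z⟫_ℝ - suppFn K ξ) = Real.exp (-(g ξ)) := by
    intro ξ; simp only [hg_def, neg_sub]
  have hfin : volume {ξ : EuclideanSpace ℝ (Fin n) | g ξ ≤ 1} ≠ ⊤ := by
    refine (lt_of_le_of_lt (measure_mono (fun ξ hξ => ?_))
      (MeasureTheory.measure_closedBall_lt_top (x := (0 : EuclideanSpace ℝ (Fin n)))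
        (r := r⁻¹))).ne
    rw [Metric.mem_closedBall, dist_zero_right]
    have h1 : r * ‖ξ‖ ≤ 1 := le_trans (hlb ξ) hξ
    rw [← one_div, le_div_iff₀ hr]
    linarith [mul_comm r ‖ξ‖]
  have hnn : (0:EuclideanSpace ℝ (Fin n) → ℝ) ≤ᵐ[volume]
      fun ξ => Real.exp (⟪ξ, z⟫_ℝ - suppFn K ξ) :=
    Filter.Eventually.of_forall fun ξ => (Real.exp_pos _).le
  have hmeas : AEStronglyMeasurable (fun ξ => Real.exp (⟪ξ, z⟫_ℝ - suppFn K ξ))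
      (volume : Measure (EuclideanSpace ℝ (Fin n))) :=
    (Real.continuous_exp.comp
      ((Continuous.inner continuous_id continuous_const).sub hcont)).aestronglyMeasurable
  have hlint : ∫⁻ ξ, ENNReal.ofReal (Real.exp (⟪ξ, z⟫_ℝ - suppFn K ξ)) =
      ENNReal.ofReal (Nat.factorial n : ℝ) * volume {ξ | g ξ ≤ 1} := by
    rw [← hformula]
    exact lintegral_congr fun ξ => by rw [hexp_eq]
  have hint : Integrable (fun ξ => Real.exp (⟪ξ, z⟫_ℝ - suppFn K ξ)) := by
    refine ⟨hmeas, ?_⟩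
    rw [MeasureTheory.hasFiniteIntegral_iff_ofReal hnn, hlint]
    exact ENNReal.mul_lt_top ENNReal.ofReal_lt_top (lt_top_iff_ne_top.2 hfin)
  refine ⟨hint, ?_⟩
  rw [MeasureTheory.integral_eq_lintegral_of_nonneg_ae hnn hmeas, hlint, hset]
  rw [ENNReal.toReal_mul, ENNReal.toReal_ofReal (by positivity)]


/-- For a convex body `K ⊂ ℝⁿ`, the function `z ↦ |K^z|`, the volume of the polar dual
`K^z = {ξ : ⟨ξ, x - z⟩ ≤ 1 ∀ x ∈ K}` of `K` with respect to the center `z`,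
is strictly convex on the interior of `K`. -/
theorem dual_volume_strictConvexOn {n : ℕ} (K : Set (EuclideanSpace ℝ (Fin n)))
    (hKconv : Convex ℝ K) (hKcomp : IsCompact K) (hKint : (interior K).Nonempty) :
    StrictConvexOn ℝ (interior K)
      (fun z => (MeasureTheory.volume
        {ξ : EuclideanSpace ℝ (Fin n) | ∀ x ∈ K, ⟪ξ, x - z⟫_ℝ ≤ 1}).toReal) := by
  refine ⟨hKconv.interior, ?_⟩
  intro x hx y hy hxy a b ha hb hab
  rcases Nat.eq_zero_or_pos n with hn | hn
  · exfalso
    apply hxy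
    subst hn
    ext i
    exact absurd i.2 (by omega)
  set m : EuclideanSpace ℝ (Fin n) := a • x + b • y with hm_def
  have hm : m ∈ interior K := hKconv.interior hx hy ha.le hb.le hab
  obtain ⟨hIx, hEx⟩ := key_repr hn hKcomp hx
  obtain ⟨hIy, hEy⟩ := key_repr hn hKcomp hy
  obtain ⟨hIm, hEm⟩ := key_repr hn hKcomp hm
  set h := suppFn K with hh_def
  set D : EuclideanSpace ℝ (Fin n) → ℝ := fun ξ =>
    a * Real.exp (⟪ξ, x⟫_ℝ - h ξ) + b * Real.exp (⟪ξ, y⟫_ℝ - h ξ)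
      - Real.exp (⟪ξ, m⟫_ℝ - h ξ) with hD_def
  have hcombo : ∀ ξ : EuclideanSpace ℝ (Fin n),
      ⟪ξ, m⟫_ℝ - h ξ = a * (⟪ξ, x⟫_ℝ - h ξ) + b * (⟪ξ, y⟫_ℝ - h ξ) := by
    intro ξ
    rw [hm_def, inner_add_right, real_inner_smul_right, real_inner_smul_right]
    have : a * h ξ + b * h ξ = h ξ := by rw [← add_mul, hab, one_mul]
    linarith [this]
  have hD0 : ∀ ξ, 0 ≤ D ξ := by
    intro ξ
    have := convexOn_exp.2 (Set.mem_univ (⟪ξ, x⟫_ℝ - h ξ)) (Set.mem_univ (⟪ξ, y⟫_ℝ - h ξ))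
      ha.le hb.le hab
    simp only [smul_eq_mul] at this
    simp only [hD_def, hcombo ξ]
    linarith
  have hDpos : ∀ ξ : EuclideanSpace ℝ (Fin n), ⟪ξ, x - y⟫_ℝ ≠ 0 → 0 < D ξ := by
    intro ξ hne
    have huv : ⟪ξ, x⟫_ℝ - h ξ ≠ ⟪ξ, y⟫_ℝ - h ξ := by
      intro hcon
      apply hne
      rw [inner_sub_right]
      linarith
    have := strictConvexOn_exp.2 (Set.mem_univ (⟪ξ, x⟫_ℝ - h ξ))
      (Set.mem_univ (⟪ξ, y⟫_ℝ - h ξ)) huv ha hb hab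
    simp only [smul_eq_mul] at this
    simp only [hD_def, hcombo ξ]
    linarith
  have hDint : Integrable D := ((hIx.const_mul a).add (hIy.const_mul b)).sub hIm
  have hintD : ∫ ξ, D ξ = a * (∫ ξ, Real.exp (⟪ξ, x⟫_ℝ - h ξ))
      + b * (∫ ξ, Real.exp (⟪ξ, y⟫_ℝ - h ξ)) - ∫ ξ, Real.exp (⟪ξ, m⟫_ℝ - h ξ) := by
    simp only [hD_def]
    have hI1 : Integrable (fun ξ => a * Real.exp (⟪ξ, x⟫_ℝ - h ξ)
        + b * Real.exp (⟪ξ, y⟫_ℝ - h ξ)) volume := (hIx.const_mul a).add (hIy.const_mul b)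
    rw [MeasureTheory.integral_sub hI1 hIm,
      MeasureTheory.integral_add (hIx.const_mul a) (hIy.const_mul b),
      MeasureTheory.integral_const_mul, MeasureTheory.integral_const_mul]
  have hsupp : 0 < volume (Function.support D) := by
    set S : Submodule ℝ (EuclideanSpace ℝ (Fin n)) :=
      LinearMap.ker (innerSL ℝ (x - y) : EuclideanSpace ℝ (Fin n) →ₗ[ℝ] ℝ) with hS_def
    have hSne : S ≠ ⊤ := by
      intro hcon
      have hmem : x - y ∈ S := hcon ▸ Submodule.mem_top
      rw [hS_def, LinearMap.mem_ker] at hmem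
      have : ⟪x - y, x - y⟫_ℝ = 0 := hmem
      rw [real_inner_self_eq_norm_mul_norm] at this
      have hxyne : x - y ≠ 0 := sub_ne_zero.2 hxy
      exact norm_ne_zero_iff.2 hxyne (mul_self_eq_zero.mp this)
    have hS0 : volume (S : Set (EuclideanSpace ℝ (Fin n))) = 0 :=
      MeasureTheory.Measure.addHaar_submodule volume S hSne
    have hcover : (Set.univ : Set (EuclideanSpace ℝ (Fin n))) ⊆
        Function.support D ∪ (S : Set (EuclideanSpace ℝ (Fin n))) := by
      intro ξ _
      by_cases hξ : ξ ∈ (S : Set (EuclideanSpace ℝ (Fin n)))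
      · exact Or.inr hξ
      · refine Or.inl ?_
        have : ⟪ξ, x - y⟫_ℝ ≠ 0 := by
          intro hcon
          apply hξ
          rw [SetLike.mem_coe, hS_def, LinearMap.mem_ker]
          show ⟪x - y, ξ⟫_ℝ = 0
          rw [real_inner_comm]; exact hcon
        exact Function.mem_support.2 (ne_of_gt (hDpos ξ this))
    have huniv : (0:ENNReal) < volume (Set.univ : Set (EuclideanSpace ℝ (Fin n))) :=
      isOpen_univ.measure_pos volume Set.univ_nonempty
    calc (0:ENNReal) < volume (Set.univ : Set (EuclideanSpace ℝ (Fin n))) := huniv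
      _ ≤ volume (Function.support D ∪ (S : Set (EuclideanSpace ℝ (Fin n)))) :=
          measure_mono hcover
      _ ≤ volume (Function.support D) + volume (S : Set (EuclideanSpace ℝ (Fin n))) :=
          measure_union_le _ _
      _ = volume (Function.support D) := by rw [hS0, add_zero]
  have hDposint : 0 < ∫ ξ, D ξ :=
    (MeasureTheory.integral_pos_iff_support_of_nonneg hD0 hDint).2 hsupp
  have hlt : ∫ ξ, Real.exp (⟪ξ, m⟫_ℝ - h ξ) <
      a * (∫ ξ, Real.exp (⟪ξ, x⟫_ℝ - h ξ)) + b * (∫ ξ, Real.exp (⟪ξ, y⟫_ℝ - h ξ)) := by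
    rw [hintD] at hDposint; linarith
  have hfac : (0:ℝ) < (Nat.factorial n : ℝ) := by positivity
  simp only [smul_eq_mul]
  rw [hEx, hEy, hEm] at hlt
  have := hlt
  nlinarith [this, hfac, ha, hb]
end

section
/- Let A be a positive-definite n×n matrix and Q_A = {x ∈ R^n : ⟨Ax,x⟩ ≤ 1}. Then for p ∈ ∂Q_A and 0 < ρ < 1, the volume of the dual body with respect to the point ρp satisfies |Q_A^{ρp}| = ω_n (det A)^{1/2} / (1−ρ²)^{(n+1)/2}, where ω_n is the volume of the Euclidean unit ball. -/
open scoped InnerProductSpace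
open MeasureTheory Matrix

private lemma det_toEuclideanLin {n : ℕ} (M : Matrix (Fin n) (Fin n) ℝ) :
    LinearMap.det (Matrix.toEuclideanLin M) = M.det := by
  have h : Matrix.toEuclideanLin M =
      (WithLp.linearEquiv 2 ℝ (Fin n → ℝ)).symm.toLinearMap ∘ₗ (Matrix.toLin' M) ∘ₗ
        (WithLp.linearEquiv 2 ℝ (Fin n → ℝ)).toLinearMap := rfl
  have h2 := LinearMap.det_conj (Matrix.toLin' M) (WithLp.linearEquiv 2 ℝ (Fin n → ℝ)).symm
  rw [h, LinearEquiv.symm_symm] at *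
  rw [h2, LinearMap.det_toLin']

private lemma toEuclideanLin_mul_apply {n : ℕ} (M N : Matrix (Fin n) (Fin n) ℝ) (x) :
    Matrix.toEuclideanLin (M * N) x = Matrix.toEuclideanLin M (Matrix.toEuclideanLin N x) := by
  simp [Matrix.toEuclideanLin_apply, Matrix.mulVec_mulVec]

private lemma rank_one_apply {n : ℕ} (a b : ℝ) (wh : EuclideanSpace ℝ (Fin n))
    (x : EuclideanSpace ℝ (Fin n)) :
    Matrix.toEuclideanLin (a • (1 : Matrix (Fin n) (Fin n) ℝ)
        + b • (Matrix.replicateCol Unit (WithLp.equiv 2 _ wh) * Matrix.replicateRow Unit (WithLp.equiv 2 _ wh))) x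
      = a • x + (b * ⟪wh, x⟫_ℝ) • wh := by
  apply (WithLp.equiv 2 (Fin n → ℝ)).injective
  simp only [WithLp.equiv_apply, Matrix.ofLp_toEuclideanLin_apply]
  rw [Matrix.add_mulVec, Matrix.smul_mulVec, Matrix.one_mulVec, Matrix.smul_mulVec]
  ext i
  simp [Matrix.mulVec, Matrix.mul_apply, dotProduct, PiLp.inner_apply,
    Finset.sum_mul, Finset.mul_sum, WithLp.ofLp_smul, WithLp.ofLp_add]
  ring_nf
  congr 1
  ext j
  ring

private lemma rank_one_det {n : ℕ} (a b : ℝ) (ha : a ≠ 0) (wh : EuclideanSpace ℝ (Fin n))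
    (hwh : ⟪wh, wh⟫_ℝ = 1) :
    (a • (1 : Matrix (Fin n) (Fin n) ℝ)
        + b • (Matrix.replicateCol Unit (WithLp.equiv 2 _ wh) * Matrix.replicateRow Unit (WithLp.equiv 2 _ wh))).det
      = a ^ n * (1 + b / a) := by
  set u : Fin n → ℝ := WithLp.equiv 2 _ wh with hu
  have h1 : a • (1 : Matrix (Fin n) (Fin n) ℝ) + b • (Matrix.replicateCol Unit u * Matrix.replicateRow Unit u)
      = a • ((1 : Matrix (Fin n) (Fin n) ℝ) + Matrix.replicateCol Unit ((b/a) • u) * Matrix.replicateRow Unit u) := by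
    rw [smul_add]
    congr 1
    rw [Matrix.replicateCol_smul, Matrix.smul_mul, smul_smul]
    field_simp
  have hdv : u ⬝ᵥ u = 1 := by
    rw [← hwh]; simp [dotProduct, PiLp.inner_apply, hu]
    rw [EuclideanSpace.norm_eq, Real.sq_sqrt (Finset.sum_nonneg fun i _ => sq_nonneg _)]
    simp [sq]
  rw [h1, Matrix.det_smul, Matrix.det_one_add_replicateCol_mul_replicateRow]
  simp [dotProduct_smul, smul_eq_mul, hdv]



private lemma keyB_aux {n : ℕ} (ρ s : ℝ) (hρ0 : 0 < ρ) (hρ1 : ρ < 1) (hs : 0 < s)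
    (hs2 : s^2 = 1 - ρ^2)
    (wh η : EuclideanSpace ℝ (Fin n)) (hnwh : ‖wh‖ = 1) :
    (‖η‖ ≤ 1 + ρ * ⟪wh, η⟫_ℝ) ↔
      ‖s • (η - (ρ/(1-ρ^2)) • wh) +
        (((1-ρ^2) - s) * ⟪wh, η - (ρ/(1-ρ^2)) • wh⟫_ℝ) • wh‖ ≤ 1 := by
  set σ : ℝ := 1 - ρ^2 with hσdef
  have hσ : 0 < σ := by nlinarith
  set t : ℝ := ⟪wh, η⟫_ℝ with htdef
  have hwh : ⟪wh, wh⟫_ℝ = 1 := by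
    rw [real_inner_self_eq_norm_sq, hnwh]; norm_num
  have ht : |t| ≤ ‖η‖ := by
    have := abs_real_inner_le_norm wh η
    rwa [hnwh, one_mul] at this
  have ht1 : t ≤ ‖η‖ := (abs_le.mp ht).2
  have ht2 : -‖η‖ ≤ t := (abs_le.mp ht).1
  have hwhc : ⟪wh, η - (ρ/σ) • wh⟫_ℝ = t - ρ/σ := by
    rw [inner_sub_right, inner_smul_right, hwh]
    ring
  set X := s • (η - (ρ/σ) • wh) + ((σ - s) * ⟪wh, η - (ρ/σ) • wh⟫_ℝ) • wh with hX
  have hnorm : ‖X‖ ^ 2 = σ * (‖η‖^2 - t^2) + (σ*t - ρ)^2 := by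
    have e1 : ⟪η, (ρ/σ) • wh⟫_ℝ = (ρ/σ) * t := by
      rw [real_inner_smul_right, real_inner_comm]
    have e3 : ‖η - (ρ/σ) • wh‖^2 = ‖η‖^2 - 2*((ρ/σ)*t) + (ρ/σ)^2 := by
      rw [norm_sub_sq_real, e1, norm_smul, hnwh, mul_one]
      simp only [Real.norm_eq_abs, sq_abs]
    have e2 : ⟪s • (η - (ρ/σ)•wh), ((σ-s)*(t-ρ/σ)) • wh⟫_ℝ
        = s*((σ-s)*(t-ρ/σ))*(t-ρ/σ) := by
      rw [real_inner_smul_left, real_inner_smul_right, real_inner_comm, hwhc]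
      ring
    rw [hX, hwhc, norm_add_sq_real, e2, norm_smul, norm_smul, hnwh]
    simp only [Real.norm_eq_abs, one_pow, mul_one, mul_pow, sq_abs]
    rw [e3]
    have hinv : (1-ρ^2) * σ⁻¹ = 1 := mul_inv_cancel₀ hσ.ne'
    linear_combination (‖η‖^2 - t^2) * hs2 + (ρ^2*((1-ρ^2)*σ⁻¹+1) - 2*ρ*t*(1-ρ^2)) * hinv
  have hkey : σ*(1+ρ*t)^2 - σ*t^2 + (σ*t-ρ)^2 = 1 := by rw [hσdef]; ring
  constructor
  · intro h
    have hN : ‖η‖^2 ≤ (1 + ρ*t)^2 := by nlinarith [norm_nonneg η]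
    have hgoal2 : ‖X‖^2 ≤ 1 := by
      rw [hnorm]
      have hint : 0 ≤ σ * ((1+ρ*t)^2 - ‖η‖^2) := mul_nonneg hσ.le (by linarith)
      linarith [hint, hkey]
    calc ‖X‖ = Real.sqrt (‖X‖^2) := (Real.sqrt_sq (norm_nonneg X)).symm
    _ ≤ Real.sqrt 1 := Real.sqrt_le_sqrt hgoal2
    _ = 1 := Real.sqrt_one
  · intro h
    have h2 : σ * (‖η‖^2 - t^2) + (σ*t - ρ)^2 ≤ 1 := by
      rw [← hnorm]
      nlinarith [norm_nonneg X]
    have h3 : σ * ‖η‖^2 ≤ σ * (1+ρ*t)^2 := by linarith [h2, hkey]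
    have hN : ‖η‖^2 ≤ (1+ρ*t)^2 := (mul_le_mul_iff_right₀ hσ).mp h3
    have hpos : 0 ≤ 1 + ρ*t := by
      by_contra hneg
      push_neg at hneg
      nlinarith [hN, norm_nonneg η, sq_nonneg (‖η‖ + 1 + ρ*t),
        mul_le_mul_of_nonneg_left ht2 hρ0.le]
    calc ‖η‖ = Real.sqrt (‖η‖^2) := (Real.sqrt_sq (norm_nonneg η)).symm
    _ ≤ Real.sqrt ((1+ρ*t)^2) := Real.sqrt_le_sqrt hN
    _ = 1+ρ*t := Real.sqrt_sq hpos
set_option maxHeartbeats 1000000 in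
/-- For a positive definite `A`, the ellipsoid `Q_A = {x : ⟨Ax,x⟩ ≤ 1}`, a boundary point
`p` (so `⟨Ap,p⟩ = 1`) and `0 < ρ < 1`, the volume of the dual body of `Q_A` with respect
to `ρ p` equals `ω_n √(det A) / (1 - ρ²)^{(n+1)/2}`, where `ω_n` is the volume of the
Euclidean unit ball. -/
theorem ellipsoid_dual_volume {n : ℕ} (A : Matrix (Fin n) (Fin n) ℝ) (hA : A.PosDef)
    (p : EuclideanSpace ℝ (Fin n)) (hp : ⟪(Matrix.toEuclideanLin A) p, p⟫_ℝ = 1)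
    (ρ : ℝ) (hρ0 : 0 < ρ) (hρ1 : ρ < 1) :
    (MeasureTheory.volume {ξ : EuclideanSpace ℝ (Fin n) |
        ∀ x : EuclideanSpace ℝ (Fin n), ⟪(Matrix.toEuclideanLin A) x, x⟫_ℝ ≤ 1 →
          ⟪ξ, x - ρ • p⟫_ℝ ≤ 1}).toReal =
      (MeasureTheory.volume (Metric.ball (0 : EuclideanSpace ℝ (Fin n)) 1)).toReal *
        Real.sqrt A.det / (1 - ρ^2) ^ (((n : ℝ) + 1)/2) := by
  -- dispatch n = 0
  rcases Nat.eq_zero_or_pos n with hn | hn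
  · exfalso
    subst hn
    have hp0 : p = 0 := Subsingleton.elim p 0
    rw [hp0, inner_zero_right] at hp
    norm_num at hp
  haveI : Nontrivial (EuclideanSpace ℝ (Fin n)) := by
    refine ⟨EuclideanSpace.single ⟨0, hn⟩ 1, 0, fun h => ?_⟩
    have := congrArg norm h
    rw [EuclideanSpace.norm_single, norm_zero] at this
    norm_num at this
  -- basic constants
  set σ : ℝ := 1 - ρ^2 with hσdef
  have hσ : 0 < σ := by nlinarith
  obtain ⟨s, hs, hs2, hssqrt⟩ : ∃ s : ℝ, 0 < s ∧ s^2 = σ ∧ Real.sqrt σ = s :=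
    ⟨Real.sqrt σ, Real.sqrt_pos.mpr hσ, Real.sq_sqrt hσ.le, rfl⟩
  -- square root of A
  obtain ⟨B, hBsd, hBB⟩ : ∃ B : Matrix (Fin n) (Fin n) ℝ, B.PosSemidef ∧ B * B = A :=
    by
      open scoped MatrixOrder in
      exact ⟨CFC.sqrt A, (CFC.sqrt_nonneg A).posSemidef, CFC.sqrt_mul_sqrt_self A hA.posSemidef.nonneg⟩
  have hBdet : 0 < B.det := by
    have h1 : B.det ^ 2 = A.det := by rw [← hBB, Matrix.det_mul, sq]
    have h2 := hA.det_pos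
    have h3 : 0 ≤ B.det := by
      rw [hBsd.1.det_eq_prod_eigenvalues]
      push_cast
      exact Finset.prod_nonneg fun i _ => hBsd.eigenvalues_nonneg i
    nlinarith
  have hBH : B.IsHermitian := hBsd.1
  have hdetB : IsUnit B.det := isUnit_iff_ne_zero.mpr hBdet.ne'
  set B' : Matrix (Fin n) (Fin n) ℝ := B⁻¹ with hB'def
  set 𝔹 := Matrix.toEuclideanLin B with h𝔹
  set 𝔹' := Matrix.toEuclideanLin B' with h𝔹'
  have hsymB : ∀ x y, ⟪𝔹 x, y⟫_ℝ = ⟪x, 𝔹 y⟫_ℝ := Matrix.isHermitian_iff_isSymmetric.mp hBH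
  have hsymB' : ∀ x y, ⟪𝔹' x, y⟫_ℝ = ⟪x, 𝔹' y⟫_ℝ :=
    Matrix.isHermitian_iff_isSymmetric.mp (hBH.inv)
  have hBB'id : ∀ x, 𝔹 (𝔹' x) = x := by
    intro x
    rw [h𝔹, h𝔹', ← toEuclideanLin_mul_apply, hB'def, Matrix.mul_nonsing_inv _ hdetB]
    simp [Matrix.toEuclideanLin_apply]
  have hB'Bid : ∀ x, 𝔹' (𝔹 x) = x := by
    intro x
    rw [h𝔹, h𝔹', ← toEuclideanLin_mul_apply, hB'def, Matrix.nonsing_inv_mul _ hdetB]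
    simp [Matrix.toEuclideanLin_apply]
  have hQ : ∀ x, ⟪(Matrix.toEuclideanLin A) x, x⟫_ℝ = ‖𝔹 x‖ ^ 2 := by
    intro x
    rw [← hBB, toEuclideanLin_mul_apply, ← h𝔹, hsymB, real_inner_self_eq_norm_sq]
  -- the vector w and its normalization
  set w : EuclideanSpace ℝ (Fin n) := 𝔹 (ρ • p) with hwdef
  have hw : ‖w‖ = ρ := by
    have h1 : ‖w‖ ^ 2 = ρ ^ 2 := by
      rw [← real_inner_self_eq_norm_sq, hwdef, hsymB, h𝔹, ← toEuclideanLin_mul_apply, hBB,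
        _root_.map_smul, real_inner_smul_left, real_inner_smul_right, real_inner_comm, hp]
      ring
    nlinarith [norm_nonneg w]
  set wh : EuclideanSpace ℝ (Fin n) := ρ⁻¹ • w with hwhdef
  have hwh : ⟪wh, wh⟫_ℝ = 1 := by
    rw [hwhdef, real_inner_smul_left, real_inner_smul_right, real_inner_self_eq_norm_sq, hw]
    field_simp
  have hnwh : ‖wh‖ = 1 := by
    have := real_inner_self_eq_norm_sq wh
    rw [hwh] at this
    nlinarith [norm_nonneg wh]
  have hwwh : w = ρ • wh := by rw [hwhdef, smul_smul]; field_simp; rw [one_smul]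
  -- the rank-one maps
  set φ : EuclideanSpace ℝ (Fin n) → EuclideanSpace ℝ (Fin n) :=
    fun x => s⁻¹ • x + ((σ⁻¹ - s⁻¹) * ⟪wh, x⟫_ℝ) • wh with hφdef
  set φ' : EuclideanSpace ℝ (Fin n) → EuclideanSpace ℝ (Fin n) :=
    fun x => s • x + ((σ - s) * ⟪wh, x⟫_ℝ) • wh with hφ'def
  have hφφ' : ∀ x, φ (φ' x) = x := by
    intro x
    simp only [hφdef, hφ'def, inner_add_right, inner_smul_right, hwh]
    match_scalars
    · field_simp
    · field_simp
      nlinarith [hs2, hs, hσ]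
  have hφ'φ : ∀ x, φ' (φ x) = x := by
    intro x
    simp only [hφdef, hφ'def, inner_add_right, inner_smul_right, hwh]
    match_scalars
    · field_simp
    · field_simp
      nlinarith [hs2, hs, hσ]
  -- key lemma A: support function description
  have hinner : ∀ ξ : EuclideanSpace ℝ (Fin n), ⟪ξ, ρ • p⟫_ℝ = ⟪𝔹' ξ, w⟫_ℝ := by
    intro ξ
    conv_lhs => rw [← hBB'id ξ]
    rw [hsymB, ← hwdef]
  have keyA : ∀ ξ : EuclideanSpace ℝ (Fin n),
      (∀ x, ⟪(Matrix.toEuclideanLin A) x, x⟫_ℝ ≤ 1 → ⟪ξ, x - ρ • p⟫_ℝ ≤ 1)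
        ↔ ‖𝔹' ξ‖ ≤ 1 + ⟪𝔹' ξ, w⟫_ℝ := by
    intro ξ
    constructor
    · intro h
      by_cases h0 : 𝔹' ξ = 0
      · rw [h0]
        simp
      · set r : ℝ := ‖𝔹' ξ‖ with hrdef
        have hr : 0 < r := norm_pos_iff.mpr h0
        have hxQ : ⟪(Matrix.toEuclideanLin A) (r⁻¹ • 𝔹' (𝔹' ξ)), (r⁻¹ • 𝔹' (𝔹' ξ))⟫_ℝ ≤ 1 := by
          rw [hQ, _root_.map_smul, hBB'id, norm_smul, Real.norm_eq_abs,
            abs_of_pos (inv_pos.mpr hr), ← hrdef, inv_mul_cancel₀ hr.ne']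
          norm_num
        have hx := h _ hxQ
        rw [inner_sub_right, hinner] at hx
        have h1 : ⟪ξ, r⁻¹ • 𝔹' (𝔹' ξ)⟫_ℝ = r := by
          rw [real_inner_smul_right, ← hsymB' ξ (𝔹' ξ), real_inner_self_eq_norm_sq, ← hrdef,
            sq, inv_mul_cancel_left₀ hr.ne']
        rw [h1] at hx
        linarith
    · intro h x hx
      rw [hQ] at hx
      have hBx : ‖𝔹 x‖ ≤ 1 := by nlinarith [norm_nonneg (𝔹 x)]
      have h1 : ⟪ξ, x⟫_ℝ = ⟪𝔹' ξ, 𝔹 x⟫_ℝ := by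
        conv_lhs => rw [← hBB'id ξ]
        rw [hsymB]
      have h2 : ⟪𝔹' ξ, 𝔹 x⟫_ℝ ≤ ‖𝔹' ξ‖ := by
        calc ⟪𝔹' ξ, 𝔹 x⟫_ℝ ≤ ‖𝔹' ξ‖ * ‖𝔹 x‖ := real_inner_le_norm _ _
        _ ≤ ‖𝔹' ξ‖ * 1 := mul_le_mul_of_nonneg_left hBx (norm_nonneg _)
        _ = ‖𝔹' ξ‖ := mul_one _
      rw [inner_sub_right, hinner, h1]
      linarith
  -- key lemma B, specialization
  set c : EuclideanSpace ℝ (Fin n) := (ρ/σ) • wh with hcdef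
  have keyB : ∀ η : EuclideanSpace ℝ (Fin n),
      (‖η‖ ≤ 1 + ⟪η, w⟫_ℝ) ↔ ‖φ' (η - c)‖ ≤ 1 := by
    intro η
    have hηw : ⟪η, w⟫_ℝ = ρ * ⟪wh, η⟫_ℝ := by
      rw [hwwh, real_inner_smul_right, real_inner_comm]
    rw [hηw]
    exact keyB_aux ρ s hρ0 hρ1 hs (by rw [hs2, hσdef]) wh η hnwh
  -- the affine parametrization
  set Mφ : Matrix (Fin n) (Fin n) ℝ := s⁻¹ • 1 + (σ⁻¹ - s⁻¹) •
      (Matrix.replicateCol Unit (WithLp.equiv 2 _ wh) * Matrix.replicateRow Unit (WithLp.equiv 2 _ wh)) with hMφ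
  set L := Matrix.toEuclideanLin (B * Mφ) with hLdef
  set v₀ : EuclideanSpace ℝ (Fin n) := 𝔹 c with hv₀
  have hL : ∀ u, L u = 𝔹 (φ u) := by
    intro u
    rw [hLdef, toEuclideanLin_mul_apply, hMφ, rank_one_apply, h𝔹, hφdef]
  have hset : {ξ : EuclideanSpace ℝ (Fin n) |
        ∀ x, ⟪(Matrix.toEuclideanLin A) x, x⟫_ℝ ≤ 1 → ⟪ξ, x - ρ • p⟫_ℝ ≤ 1}
      = (fun u => v₀ + L u) '' Metric.closedBall 0 1 := by
    ext ξ
    simp only [Set.mem_setOf_eq, Set.mem_image, Metric.mem_closedBall, dist_zero_right]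
    rw [keyA ξ, keyB (𝔹' ξ)]
    constructor
    · intro h
      refine ⟨φ' (𝔹' ξ - c), h, ?_⟩
      rw [hL, hφφ', map_sub, hBB'id, ← hv₀]
      abel
    · rintro ⟨u, hu, rfl⟩
      have h1 : 𝔹' (v₀ + L u) - c = φ u := by
        rw [hL, hv₀, ← map_add, hB'Bid, add_sub_cancel_left]
      rw [h1, hφ'φ]
      exact hu
  rw [hset]
  have himg : (fun u => v₀ + L u) '' Metric.closedBall 0 1
      = (fun y => v₀ + y) '' (⇑L '' Metric.closedBall 0 1) := by
    rw [← Set.image_comp]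
    rfl
  rw [himg, Set.image_add_left, measure_preimage_add, Measure.addHaar_image_linearMap,
    Measure.addHaar_closedBall_eq_addHaar_ball]
  have hdetL : LinearMap.det L = B.det * ((s⁻¹)^n * (1 + (σ⁻¹ - s⁻¹)/s⁻¹)) := by
    rw [hLdef, det_toEuclideanLin, Matrix.det_mul, hMφ,
      rank_one_det _ _ (by positivity) wh hwh]
  have hsqrtA : Real.sqrt A.det = B.det := by
    rw [← hBB, Matrix.det_mul, Real.sqrt_mul_self hBdet.le]
  have hpow : σ ^ (((n:ℝ)+1)/2) = s^(n+1) := by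
    have h1 : ((n:ℝ)+1)/2 = (1/2 : ℝ) * ((n+1 : ℕ) : ℝ) := by push_cast; ring
    rw [h1, Real.rpow_mul hσ.le, Real.rpow_natCast, ← Real.sqrt_eq_rpow, hssqrt]
  have h5 : (1 + (σ⁻¹ - s⁻¹)/s⁻¹) = s/σ := by
    field_simp
    ring
  have hdetpos : 0 < LinearMap.det L := by
    rw [hdetL, h5]
    positivity
  rw [ENNReal.toReal_mul, ENNReal.toReal_ofReal (abs_nonneg _), hsqrtA, hpow,
    abs_of_pos hdetpos, hdetL, h5, ← hs2]
  field_simp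
  have hsn : (1/s)^n * s^n = 1 := by rw [← mul_pow, one_div, inv_mul_cancel₀ hs.ne', one_pow]
  rw [pow_succ]
  linear_combination (s * (MeasureTheory.volume (Metric.ball (0 : EuclideanSpace ℝ (Fin n)) 1)).toReal) * hsn
end

section
/- For an ellipsoid defined by a positive definite matrix A and a boundary point p with ⟨Ap,p⟩ = 1, one has det A = k_p / ⟨p, ν_p⟩^{n+1}, where k_p is the Gaussian curvature of the boundary at p and ν_p = Ap/|Ap| is the outward unit normal. -/
open scoped InnerProductSpace

/-- The shape operator of the ellipsoid `{x : ⟨Ax,x⟩ ≤ 1}` at a boundary point `p`: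
the differential of the Gauss map `x ↦ Ax/|Ax|` restricted to the tangent space
`T_p = (span Ap)ᗮ`, namely `v ↦ |Ap|⁻¹ ⬝ proj_{T_p}(Av)`. -/
noncomputable def shapeOperator {n : ℕ} (A : Matrix (Fin n) (Fin n) ℝ)
    (p : EuclideanSpace ℝ (Fin n)) :
    ↥((Submodule.span ℝ {(Matrix.toEuclideanLin A) p})ᗮ) →ₗ[ℝ]
      ↥((Submodule.span ℝ {(Matrix.toEuclideanLin A) p})ᗮ) :=
  ‖(Matrix.toEuclideanLin A) p‖⁻¹ •
    ((Submodule.orthogonalProjection ((Submodule.span ℝ {(Matrix.toEuclideanLin A) p})ᗮ)).toLinearMap.comp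
      (((Matrix.toEuclideanLin A)).comp
        ((Submodule.span ℝ {(Matrix.toEuclideanLin A) p})ᗮ).subtype))

open Submodule in
lemma ellipsoid_aux {n : ℕ}
    (f : EuclideanSpace ℝ (Fin n) →ₗ[ℝ] EuclideanSpace ℝ (Fin n))
    (p : EuclideanSpace ℝ (Fin n)) (hp : ⟪f p, p⟫_ℝ = 1) :
    LinearMap.det f =
      LinearMap.det (‖f p‖⁻¹ •
        ((orthogonalProjection ((Submodule.span ℝ {f p})ᗮ)).toLinearMap.comp
          (f.comp ((Submodule.span ℝ {f p})ᗮ).subtype))) * ‖f p‖ ^ (n + 1) := by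
  classical
  set q : EuclideanSpace ℝ (Fin n) := f p with hqdef
  have hq0 : q ≠ 0 := by
    intro h
    rw [h, inner_zero_left] at hp
    exact zero_ne_one hp
  have hqn : (0:ℝ) < ‖q‖ := norm_pos_iff.mpr hq0
  set T : Submodule ℝ (EuclideanSpace ℝ (Fin n)) := (Submodule.span ℝ {q})ᗮ with hTdef
  set m : ℕ := Module.finrank ℝ ↥T with hmdef
  have hmn : m + 1 = n := by
    have h1 : Module.finrank ℝ (Submodule.span ℝ {q}) = 1 := finrank_span_singleton hq0
    have h2 := Submodule.finrank_add_finrank_orthogonal (K := Submodule.span ℝ {q})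
    rw [h1, finrank_euclideanSpace_fin, ← hTdef] at h2
    omega
  set b₀ : OrthonormalBasis (Fin m) ℝ ↥T := stdOrthonormalBasis ℝ ↥T with hb₀
  set u : EuclideanSpace ℝ (Fin n) := ‖q‖⁻¹ • q with hudef
  have hTq : ∀ x : ↥T, ⟪(x : EuclideanSpace ℝ (Fin n)), q⟫_ℝ = 0 := by
    intro x
    rw [real_inner_comm]
    exact x.2 q (Submodule.mem_span_singleton_self q)
  have hTu : ∀ x : ↥T, ⟪(x : EuclideanSpace ℝ (Fin n)), u⟫_ℝ = 0 := by
    intro x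
    rw [hudef, real_inner_smul_right, hTq, mul_zero]
  have huq : ⟪u, q⟫_ℝ = ‖q‖ := by
    rw [hudef, real_inner_smul_left, real_inner_self_eq_norm_sq]
    field_simp
  have hup : ⟪u, p⟫_ℝ = ‖q‖⁻¹ := by
    rw [hudef, real_inner_smul_left, hp, mul_one]
  set W : Fin m ⊕ Unit → EuclideanSpace ℝ (Fin n) :=
    Sum.elim (fun i => (b₀ i : EuclideanSpace ℝ (Fin n))) (fun _ => u) with hWdef
  have hW : Orthonormal ℝ W := by
    constructor
    · rintro (i | i)
      · simp only [hWdef, Sum.elim_inl]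
        exact b₀.orthonormal.1 i
      · simp only [hWdef, Sum.elim_inr, hudef, norm_smul, norm_inv, norm_norm]
        field_simp
    · rintro (i | i) (j | j) hij
      · have : i ≠ j := fun h => hij (by rw [h])
        simpa [hWdef, Submodule.coe_inner] using b₀.orthonormal.2 this
      · simpa [hWdef] using hTu (b₀ i)
      · simp only [hWdef, Sum.elim_inl, Sum.elim_inr]
        rw [real_inner_comm]
        exact hTu (b₀ j)
      · exact absurd rfl hij
  have hcard : Fintype.card (Fin m ⊕ Unit) = Module.finrank ℝ (EuclideanSpace ℝ (Fin n)) := by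
    simp [finrank_euclideanSpace_fin, hmn]
  set v : Module.Basis (Fin m ⊕ Unit) ℝ (EuclideanSpace ℝ (Fin n)) :=
    basisOfLinearIndependentOfCardEqFinrank hW.linearIndependent hcard with hvdef
  have hv : ⇑v = W := coe_basisOfLinearIndependentOfCardEqFinrank _ _
  set w : OrthonormalBasis (Fin m ⊕ Unit) ℝ (EuclideanSpace ℝ (Fin n)) :=
    v.toOrthonormalBasis (hv ▸ hW) with hwdef
  have hw : ∀ k, w k = W k := by
    intro k
    rw [hwdef, Module.Basis.coe_toOrthonormalBasis, hv]
  set N : Matrix (Fin m ⊕ Unit) (Fin m ⊕ Unit) ℝ :=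
    LinearMap.toMatrix w.toBasis w.toBasis f with hNdef
  have hN : ∀ i k, N i k = ⟪W i, f (W k)⟫_ℝ := by
    intro i k
    rw [hNdef, LinearMap.toMatrix_apply, OrthonormalBasis.coe_toBasis_repr_apply,
      OrthonormalBasis.repr_apply_apply, OrthonormalBasis.coe_toBasis, hw, hw]
  set C : Matrix (Fin m ⊕ Unit) (Fin m ⊕ Unit) ℝ :=
    Matrix.fromBlocks 1 (Matrix.of fun i _ => ⟪((b₀ i : EuclideanSpace ℝ (Fin n))), p⟫_ℝ) 0
      (Matrix.of fun _ _ => ⟪u, p⟫_ℝ) with hCdef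
  have hC2 : ∀ k, C k (Sum.inr ()) = ⟪W k, p⟫_ℝ := by
    rintro (a | a) <;> rfl
  have hdetC : C.det = ⟪u, p⟫_ℝ := by
    rw [hCdef, Matrix.det_fromBlocks_zero₂₁, Matrix.det_one, one_mul, Matrix.det_unique, Matrix.of_apply]
  set M' : Matrix (Fin m) (Fin m) ℝ :=
    (fun i j => ⟪((b₀ i : EuclideanSpace ℝ (Fin n))), f (b₀ j)⟫_ℝ) with hM'def
  -- expansion of p
  have hfp : ∑ k : Fin m ⊕ Unit, ⟪W k, p⟫_ℝ • f (W k) = q := by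
    have h1 : ∑ k : Fin m ⊕ Unit, ⟪W k, p⟫_ℝ • W k = p := by
      have := w.sum_repr' p
      simp only [hw] at this
      exact this
    calc ∑ k : Fin m ⊕ Unit, ⟪W k, p⟫_ℝ • f (W k)
        = f (∑ k : Fin m ⊕ Unit, ⟪W k, p⟫_ℝ • W k) := by
          rw [map_sum]; simp only [map_smul]
      _ = q := by rw [h1, hqdef]
  have hNC : N * C = Matrix.fromBlocks M' 0
      (Matrix.of fun _ j => ⟪u, f (b₀ j)⟫_ℝ) (Matrix.of fun _ _ => ‖q‖) := by
    ext i k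
    rw [Matrix.mul_apply]
    cases k with
    | inl k =>
        have hsum : ∑ j : Fin m ⊕ Unit, N i j * C j (Sum.inl k) = N i (Sum.inl k) := by
          rw [Fintype.sum_sum_type]
          simp [hCdef, Matrix.fromBlocks, Matrix.one_apply]
        rw [hsum, hN]
        cases i with
        | inl i => simp [Matrix.fromBlocks, hWdef, hM'def]
        | inr i => simp [Matrix.fromBlocks, hWdef]
    | inr k =>
        have hsum : ∑ j : Fin m ⊕ Unit, N i j * C j (Sum.inr k) = ⟪W i, q⟫_ℝ := by
          rw [← hfp, inner_sum]
          refine Finset.sum_congr rfl fun j _ => ?_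
          rw [hN, hC2, real_inner_smul_right]
          · ring
        rw [hsum]
        cases i with
        | inl i => simpa [Matrix.fromBlocks, hWdef] using hTq (b₀ i)
        | inr i => simp [Matrix.fromBlocks, hWdef, huq]
  have hdetN : N.det = LinearMap.det f := LinearMap.det_toMatrix _ _
  have hdet1 : Matrix.det (Matrix.of fun (_ _ : Unit) => ‖q‖) = ‖q‖ := Matrix.det_unique _
  have hkey : LinearMap.det f * ⟪u, p⟫_ℝ = M'.det * ‖q‖ := by
    have h := congrArg Matrix.det hNC
    rw [Matrix.det_mul, hdetN, hdetC, Matrix.det_fromBlocks_zero₁₂] at h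
    rw [h]
    congr 1
  -- the shape operator
  set L : ↥T →ₗ[ℝ] ↥T :=
    (orthogonalProjection T).toLinearMap.comp (f.comp T.subtype) with hLdef
  have hdetL : LinearMap.det L = M'.det := by
    rw [← LinearMap.det_toMatrix b₀.toBasis]
    congr 1
    ext i j
    rw [LinearMap.toMatrix_apply, OrthonormalBasis.coe_toBasis_repr_apply,
      OrthonormalBasis.repr_apply_apply, OrthonormalBasis.coe_toBasis]
    rw [hLdef]
    simp only [LinearMap.coe_comp, Function.comp_apply, Submodule.coe_subtype,
      ContinuousLinearMap.coe_coe]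
    rw [inner_orthogonalProjection_eq_of_mem_left]
  have hdetS : LinearMap.det (‖q‖⁻¹ • L) = ‖q‖⁻¹ ^ m * M'.det := by
    rw [LinearMap.det_smul, hdetL, ← hmdef]
  rw [hdetS]
  have hq' : ‖q‖ ≠ 0 := ne_of_gt hqn
  have hdf : LinearMap.det f = M'.det * (‖q‖ * ‖q‖) := by
    have hkey2 : LinearMap.det f * ‖q‖⁻¹ = M'.det * ‖q‖ := by rw [← hup]; exact hkey
    field_simp at hkey2
    linarith
  have hpow : n + 1 = m + 2 := by omega
  rw [hpow, hdf]
  rw [pow_succ, pow_succ]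
  field_simp
  rw [mul_assoc, ← mul_pow, one_div_mul_cancel hq', one_pow, mul_one]

/-- For an ellipsoid given by the positive definite matrix `A` and a boundary point `p`
(`⟨Ap,p⟩ = 1`), one has `det A = k_p / ⟨p, ν_p⟩^{n+1}`, where `k_p` is the Gaussian
curvature (determinant of the shape operator) at `p` and `ν_p = Ap/|Ap|` is the outward
unit normal. -/
theorem ellipsoid_det_eq_curvature {n : ℕ} (A : Matrix (Fin n) (Fin n) ℝ) (hA : A.PosDef)
    (p : EuclideanSpace ℝ (Fin n)) (hp : ⟪(Matrix.toEuclideanLin A) p, p⟫_ℝ = 1) :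
    A.det = LinearMap.det (shapeOperator A p) /
      ⟪p, ‖(Matrix.toEuclideanLin A) p‖⁻¹ • (Matrix.toEuclideanLin A) p⟫_ℝ ^ (n + 1) := by
  have haux := ellipsoid_aux (Matrix.toEuclideanLin A) p hp
  have hdetf : LinearMap.det ((Matrix.toEuclideanLin A) :
      EuclideanSpace ℝ (Fin n) →ₗ[ℝ] EuclideanSpace ℝ (Fin n)) = A.det := by
    rw [Matrix.toEuclideanLin_eq_toLin]
    exact LinearMap.det_toLin _ _
  have hin : ⟪p, ‖(Matrix.toEuclideanLin A) p‖⁻¹ • (Matrix.toEuclideanLin A) p⟫_ℝ =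
      ‖(Matrix.toEuclideanLin A) p‖⁻¹ := by
    rw [real_inner_smul_right, real_inner_comm, hp, mul_one]
  have hS : shapeOperator A p =
      ‖(Matrix.toEuclideanLin A) p‖⁻¹ •
        ((Submodule.orthogonalProjection ((Submodule.span ℝ {(Matrix.toEuclideanLin A) p})ᗮ)).toLinearMap.comp
          (((Matrix.toEuclideanLin A)).comp
            ((Submodule.span ℝ {(Matrix.toEuclideanLin A) p})ᗮ).subtype)) := rfl
  rw [hin, hS, ← hdetf, haux, inv_pow, div_inv_eq_mul]
end
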